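/- For an abelian group G, the subgroup lattice of G is distributive if and only if G contains no three nontrivial subgroups U, V, W with U ⊓ W = V ⊓ W = ⊥ and U ⊔ V = U ⊔ W = V ⊔ W. -/

import Mathlib

private lemma aux_pair {G : Type*} [CommGroup G] (b c : G)
    (h : ¬ ∃ (g : G) (m n s t : ℤ), b = g ^ m ∧ c = g ^ n ∧ g = b ^ s * c ^ t) :
    ∃ u w : G, u ≠ 1 ∧ w ≠ 1 ∧ (∀ i j : ℤ, u ^ i = w ^ j → u ^ i = 1) ∧
      (∀ k : ℤ, u ^ k = 1 → w ^ k = 1) := by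
  classical
  set ψ : (Fin 2 → ℤ) → G := fun v => b ^ v 0 * c ^ v 1 with hψdef
  have hψadd : ∀ v w : Fin 2 → ℤ, ψ (v + w) = ψ v * ψ w := by
    intro v w
    simp only [hψdef, Pi.add_apply, zpow_add]
    exact mul_mul_mul_comm _ _ _ _
  have hψsmul : ∀ (k : ℤ) (v : Fin 2 → ℤ), ψ (k • v) = ψ v ^ k := by
    intro k v
    simp only [hψdef, Pi.smul_apply, smul_eq_mul, mul_zpow, mul_comm k, zpow_mul]
  let S : Submodule ℤ (Fin 2 → ℤ) :=
    { carrier := {v | ψ v = 1}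
      add_mem' := by
        intro v w hv hw
        simp only [Set.mem_setOf_eq] at *
        rw [hψadd, hv, hw, mul_one]
      zero_mem' := by simp [hψdef]
      smul_mem' := by
        intro k v hv
        simp only [Set.mem_setOf_eq] at *
        rw [hψsmul, hv, one_zpow] }
  have hS : ∀ v : Fin 2 → ℤ, v ∈ S ↔ ψ v = 1 := fun v => Iff.rfl
  obtain ⟨nn, snf⟩ := S.smithNormalForm (Pi.basisFun ℤ (Fin 2))
  set δ : Fin 2 → ℤ := fun j => if h : ∃ i, snf.f i = j then snf.a h.choose else 0 with hδdef
  -- membership characterization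
  have hmem : ∀ v : Fin 2 → ℤ, v ∈ S ↔ ∀ j : Fin 2, δ j ∣ snf.bM.repr v j := by
    intro v
    constructor
    · intro hv j
      by_cases hj : ∃ i, snf.f i = j
      · have hij : snf.f hj.choose = j := hj.choose_spec
        have hrepr := snf.repr_apply_embedding_eq_repr_smul (m := ⟨v, hv⟩) (i := hj.choose)
        rw [hij] at hrepr
        simp only [hδdef, dif_pos hj]
        rw [hrepr, map_smul, Finsupp.smul_apply, smul_eq_mul]
        exact Dvd.intro _ rfl
      · have h0 := snf.repr_eq_zero_of_notMem_range (m := ⟨v, hv⟩)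
          (by simpa using fun i => (hj ⟨i, ·⟩))
        simp only [hδdef, dif_neg hj]
        rw [h0]
    · intro hdvd
      have hv : v = ∑ j : Fin 2, snf.bM.repr v j • snf.bM j := (snf.bM.sum_repr v).symm
      rw [hv]
      refine Submodule.sum_mem S fun j _ => ?_
      by_cases hj : ∃ i, snf.f i = j
      · obtain ⟨k, hk⟩ := hdvd j
        rw [hδdef] at hk
        simp only [dif_pos hj] at hk
        have hij : snf.f hj.choose = j := hj.choose_spec
        rw [hk, mul_comm, mul_smul]
        have heq : snf.a hj.choose • snf.bM j = (snf.bN hj.choose : Fin 2 → ℤ) := by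
          rw [snf.snf hj.choose, hij]
        rw [heq]
        exact Submodule.smul_mem S k (snf.bN hj.choose).2
      · have : snf.bM.repr v j = 0 := by
          have := hdvd j
          rw [hδdef] at this
          simp only [dif_neg hj] at this
          exact zero_dvd_iff.mp this
        rw [this, zero_smul]
        exact Submodule.zero_mem S
  set g0 : G := ψ (snf.bM 0) with hg0
  set g1 : G := ψ (snf.bM 1) with hg1
  have key : ∀ m n : ℤ, g0 ^ m * g1 ^ n = 1 ↔ (δ 0 ∣ m ∧ δ 1 ∣ n) := by
    intro m n
    have h1 : g0 ^ m * g1 ^ n = ψ (m • snf.bM 0 + n • snf.bM 1) := by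
      rw [hψadd, hψsmul, hψsmul]
    have h2 : ∀ j : Fin 2, snf.bM.repr (m • snf.bM 0 + n • snf.bM 1) j
        = (if j = 0 then m else n) := by
      intro j
      simp only [map_add, map_smul, Module.Basis.repr_self, Finsupp.coe_add, Finsupp.coe_smul,
        Pi.add_apply, Pi.smul_apply, Finsupp.single_apply, smul_eq_mul]
      fin_cases j <;> norm_num
    rw [h1, ← hS, hmem]
    constructor
    · intro hall
      refine ⟨?_, ?_⟩
      · have := hall 0; rwa [h2 0, if_pos rfl] at this
      · have := hall 1; rwa [h2 1, if_neg (by norm_num)] at this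
    · rintro ⟨ha, hb⟩ j
      rw [h2 j]
      fin_cases j <;> simpa
  have key0 : ∀ m : ℤ, g0 ^ m = 1 ↔ δ 0 ∣ m := by
    intro m
    have := key m 0
    rw [zpow_zero, mul_one] at this
    rw [this]
    simp
  have key1 : ∀ n : ℤ, g1 ^ n = 1 ↔ δ 1 ∣ n := by
    intro n
    have := key 0 n
    rw [zpow_zero, one_mul] at this
    rw [this]
    simp
  -- expressing b and c in terms of g0, g1
  have hexp : ∀ v : Fin 2 → ℤ, ψ v = g0 ^ snf.bM.repr v 0 * g1 ^ snf.bM.repr v 1 := by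
    intro v
    conv_lhs => rw [show v = ∑ j : Fin 2, snf.bM.repr v j • snf.bM j from (snf.bM.sum_repr v).symm]
    rw [Fin.sum_univ_two, hψadd, hψsmul, hψsmul]
  have hgexp : ∀ j : Fin 2, ψ (snf.bM j) = b ^ (snf.bM j 0) * c ^ (snf.bM j 1) := fun j => rfl
  have hbv : b = ψ ![1, 0] := by simp [hψdef]
  have hcv : c = ψ ![0, 1] := by simp [hψdef]
  set β0 : ℤ := snf.bM.repr ![1, 0] 0
  set β1 : ℤ := snf.bM.repr ![1, 0] 1
  set γ0 : ℤ := snf.bM.repr ![0, 1] 0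
  set γ1 : ℤ := snf.bM.repr ![0, 1] 1
  have hb : b = g0 ^ β0 * g1 ^ β1 := by rw [hbv, hexp]
  have hc : c = g0 ^ γ0 * g1 ^ γ1 := by rw [hcv, hexp]
  -- now case analysis on δ 0, δ 1
  by_cases hu0 : IsUnit (δ 0)
  · -- g0 = 1, group generated by g1
    exfalso
    have hg01 : g0 = 1 := by
      rw [show g0 = g0 ^ (1:ℤ) by simp, key0]
      exact hu0.dvd
    refine h ⟨g1, β1, γ1, snf.bM 1 0, snf.bM 1 1, ?_, ?_, ?_⟩
    · rw [hb, hg01, one_zpow, one_mul]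
    · rw [hc, hg01, one_zpow, one_mul]
    · rw [hg1, hgexp]
  by_cases hu1 : IsUnit (δ 1)
  · exfalso
    have hg11 : g1 = 1 := by
      rw [show g1 = g1 ^ (1:ℤ) by simp, key1]
      exact hu1.dvd
    refine h ⟨g0, β0, γ0, snf.bM 0 0, snf.bM 0 1, ?_, ?_, ?_⟩
    · rw [hb, hg11, one_zpow, mul_one]
    · rw [hc, hg11, one_zpow, mul_one]
    · rw [hg0, hgexp]
  have hne0 : g0 ≠ 1 := fun hh => hu0 (isUnit_of_dvd_one ((key0 1).mp (by rw [zpow_one, hh])))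
  have hne1 : g1 ≠ 1 := fun hh => hu1 (isUnit_of_dvd_one ((key1 1).mp (by rw [zpow_one, hh])))
  by_cases hz0 : δ 0 = 0
  · -- g0 has infinite order
    refine ⟨g0, g1, hne0, hne1, ?_, ?_⟩
    · intro i j hij
      have : g0 ^ i * g1 ^ (-j) = 1 := by rw [zpow_neg, hij, mul_inv_cancel]
      have hi : i = 0 := by
        have := ((key i (-j)).mp this).1
        rwa [hz0, zero_dvd_iff] at this
      rw [hi, zpow_zero]
    · intro k hk
      have hk0 : k = 0 := by
        have := (key0 k).mp hk
        rwa [hz0, zero_dvd_iff] at this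
      rw [hk0, zpow_zero]
  by_cases hz1 : δ 1 = 0
  · refine ⟨g1, g0, hne1, hne0, ?_, ?_⟩
    · intro i j hij
      have : g0 ^ (-j) * g1 ^ i = 1 := by rw [zpow_neg, mul_comm, hij, mul_inv_cancel]
      have hi : i = 0 := by
        have := ((key (-j) i).mp this).2
        rwa [hz1, zero_dvd_iff] at this
      rw [hi, zpow_zero]
    · intro k hk
      have hk0 : k = 0 := by
        have := (key1 k).mp hk
        rwa [hz1, zero_dvd_iff] at this
      rw [hk0, zpow_zero]
  -- both δ's nonzero, non-unit
  set e : ℕ := Int.gcd (δ 0) (δ 1) with he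
  by_cases hcop : e = 1
  · -- coprime: CRT, cyclic, contradiction
    exfalso
    obtain ⟨x, y, hxy⟩ := Int.isCoprime_iff_gcd_eq_one.mpr hcop
    set g : G := g0 * g1 with hg
    have hgpow : ∀ k : ℤ, g ^ k = g0 ^ k * g1 ^ k := fun k => mul_zpow g0 g1 k
    have crt : ∀ p q : ℤ, ∃ k : ℤ, g0 ^ p * g1 ^ q = g ^ k := by
      intro p q
      refine ⟨q * x * δ 0 + p * y * δ 1, ?_⟩
      rw [hgpow]
      have h00 : g0 ^ (q * x * δ 0 + p * y * δ 1) = g0 ^ p := by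
        have : δ 0 ∣ (q * x * δ 0 + p * y * δ 1) - p := by
          have : (q * x * δ 0 + p * y * δ 1) - p = q * x * δ 0 + p * (y * δ 1 - 1) := by ring
          rw [this]
          have : y * δ 1 - 1 = -(x * δ 0) := by linarith [hxy]
          rw [this]
          exact dvd_add ⟨q * x, by ring⟩ ⟨-(p * x), by ring⟩
        obtain ⟨k, hk⟩ := this
        have : q * x * δ 0 + p * y * δ 1 = p + δ 0 * k := by linarith [hk]
        rw [this, zpow_add, zpow_mul, (key0 (δ 0)).mpr dvd_rfl, one_zpow, mul_one]
      have h11 : g1 ^ (q * x * δ 0 + p * y * δ 1) = g1 ^ q := by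
        have : δ 1 ∣ (q * x * δ 0 + p * y * δ 1) - q := by
          have : (q * x * δ 0 + p * y * δ 1) - q = p * y * δ 1 + q * (x * δ 0 - 1) := by ring
          rw [this]
          have : x * δ 0 - 1 = -(y * δ 1) := by linarith [hxy]
          rw [this]
          exact dvd_add ⟨p * y, by ring⟩ ⟨-(q * y), by ring⟩
        obtain ⟨k, hk⟩ := this
        have : q * x * δ 0 + p * y * δ 1 = q + δ 1 * k := by linarith [hk]
        rw [this, zpow_add, zpow_mul, (key1 (δ 1)).mpr dvd_rfl, one_zpow, mul_one]
      rw [h00, h11]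
    obtain ⟨kb, hkb⟩ := crt β0 β1
    obtain ⟨kc, hkc⟩ := crt γ0 γ1
    refine h ⟨g, kb, kc, snf.bM 0 0 + snf.bM 1 0, snf.bM 0 1 + snf.bM 1 1, ?_, ?_, ?_⟩
    · rw [hb, hkb]
    · rw [hc, hkc]
    · rw [hg, hg0, hg1, hgexp, hgexp, zpow_add, zpow_add]
      exact mul_mul_mul_comm _ _ _ _
  · -- gcd ≥ 2
    have hegcd0 : (e : ℤ) ∣ δ 0 := Int.gcd_dvd_left _ _
    have hegcd1 : (e : ℤ) ∣ δ 1 := Int.gcd_dvd_right _ _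
    have hene : (e : ℤ) ≠ 0 := by
      simp only [he, Ne, Int.natCast_eq_zero, Int.gcd_eq_zero_iff, not_and_or]
      exact Or.inl hz0
    obtain ⟨q0, hq0⟩ := hegcd0
    obtain ⟨q1, hq1⟩ := hegcd1
    have hq0ne : q0 ≠ 0 := fun hh => hz0 (by rw [hq0, hh, mul_zero])
    have hq1ne : q1 ≠ 0 := fun hh => hz1 (by rw [hq1, hh, mul_zero])
    have hdvd0 : ∀ i : ℤ, δ 0 ∣ q0 * i ↔ (e : ℤ) ∣ i := by
      intro i
      rw [hq0, mul_comm (e : ℤ) q0]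
      exact mul_dvd_mul_iff_left hq0ne
    have hdvd1 : ∀ i : ℤ, δ 1 ∣ q1 * i ↔ (e : ℤ) ∣ i := by
      intro i
      rw [hq1, mul_comm (e : ℤ) q1]
      exact mul_dvd_mul_iff_left hq1ne
    refine ⟨g0 ^ q0, g1 ^ q1, ?_, ?_, ?_, ?_⟩
    · intro hh
      have : δ 0 ∣ q0 * 1 := by rw [mul_one]; exact (key0 q0).mp hh
      rw [hdvd0] at this
      have : (e : ℤ) = 1 := Int.eq_one_of_dvd_one (by positivity) this
      exact hcop (by exact_mod_cast this)
    · intro hh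
      have : δ 1 ∣ q1 * 1 := by rw [mul_one]; exact (key1 q1).mp hh
      rw [hdvd1] at this
      have : (e : ℤ) = 1 := Int.eq_one_of_dvd_one (by positivity) this
      exact hcop (by exact_mod_cast this)
    · intro i j hij
      rw [← zpow_mul, ← zpow_mul] at *
      have h1 : g0 ^ (q0 * i) * g1 ^ (-(q1 * j)) = 1 := by
        rw [zpow_neg, hij, mul_inv_cancel]
      exact (key0 _).mpr ((key _ _).mp h1).1
    · intro k hk
      rw [← zpow_mul] at hk
      rw [← zpow_mul]
      have := (hdvd0 k).mp ((key0 _).mp hk)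
      exact (key1 _).mpr ((hdvd1 k).mpr this)

theorem stmt_15 {G : Type*} [CommGroup G] :
    (∀ A B C : Subgroup G, A ⊓ (B ⊔ C) = (A ⊓ B) ⊔ (A ⊓ C)) ↔
    ¬ ∃ U V W : Subgroup G, U ≠ ⊥ ∧ V ≠ ⊥ ∧ W ≠ ⊥ ∧
      U ⊓ W = ⊥ ∧ V ⊓ W = ⊥ ∧ U ⊔ V = U ⊔ W ∧ U ⊔ W = V ⊔ W := by
  constructor
  · intro hdist
    rintro ⟨U, V, W, hU, hV, hW, hUW, hVW, h1, h2⟩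
    apply hW
    have hWle : W ≤ U ⊔ V := h1 ▸ le_sup_right
    have hweq : W = W ⊓ (U ⊔ V) := (inf_eq_left.mpr hWle).symm
    rw [hweq, hdist, inf_comm W U, inf_comm W V, hUW, hVW, sup_idem]
  · intro h A B C
    refine le_antisymm ?_ (le_inf (sup_le inf_le_left inf_le_left)
      (sup_le (inf_le_right.trans le_sup_left) (inf_le_right.trans le_sup_right)))
    intro x hx
    obtain ⟨hxA, hxBC⟩ := Subgroup.mem_inf.mp hx
    obtain ⟨b, hbB, c, hcC, rfl⟩ := Subgroup.mem_sup.mp hxBC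
    have hloc : ∃ (g : G) (m n s t : ℤ), b = g ^ m ∧ c = g ^ n ∧ g = b ^ s * c ^ t := by
      by_contra hnc
      obtain ⟨u, w, hu, hw, hmeet, himp⟩ := aux_pair b c hnc
      refine h ⟨Subgroup.zpowers u, Subgroup.zpowers (u * w), Subgroup.zpowers w,
        ?_, ?_, ?_, ?_, ?_, ?_, ?_⟩
      · simpa [Subgroup.zpowers_eq_bot] using hu
      · rw [Ne, Subgroup.zpowers_eq_bot]
        intro huw
        apply hu
        have : u ^ (1:ℤ) = w ^ (-1:ℤ) := by
          simp only [zpow_one, zpow_neg]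
          exact eq_inv_of_mul_eq_one_left huw
        have := hmeet 1 (-1) this
        simpa using this
      · simpa [Subgroup.zpowers_eq_bot] using hw
      · rw [eq_bot_iff]
        intro y hy
        obtain ⟨⟨i, hi⟩, ⟨j, hj⟩⟩ := Subgroup.mem_inf.mp hy
        change u ^ i = y at hi
        change w ^ j = y at hj
        have : u ^ i = w ^ j := by rw [hi, hj]
        have := hmeet i j this
        simp only [Subgroup.mem_bot]
        rw [← hi, this]
      · rw [eq_bot_iff]
        intro y hy
        obtain ⟨⟨i, hi⟩, ⟨j, hj⟩⟩ := Subgroup.mem_inf.mp hy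
        change (u * w) ^ i = y at hi
        change w ^ j = y at hj
        rw [mul_zpow] at hi
        have hui : u ^ i = w ^ (j - i) := by
          rw [zpow_sub, eq_mul_inv_iff_mul_eq, hi, hj]
        have hu1 : u ^ i = 1 := hmeet i (j - i) hui
        have hw1 : w ^ i = 1 := himp i hu1
        simp only [Subgroup.mem_bot]
        rw [← hi, hu1, hw1, one_mul]
      · apply le_antisymm
        · refine sup_le le_sup_left (Subgroup.zpowers_le.mpr ?_)
          exact mul_mem (Subgroup.mem_sup_left (Subgroup.mem_zpowers u))
            (Subgroup.mem_sup_right (Subgroup.mem_zpowers w))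
        · refine sup_le le_sup_left (Subgroup.zpowers_le.mpr ?_)
          have hmm : u⁻¹ * (u * w) ∈ Subgroup.zpowers u ⊔ Subgroup.zpowers (u * w) :=
            mul_mem (Subgroup.mem_sup_left (inv_mem (Subgroup.mem_zpowers u)))
              (Subgroup.mem_sup_right (Subgroup.mem_zpowers (u * w)))
          simpa using hmm
      · apply le_antisymm
        · refine sup_le (Subgroup.zpowers_le.mpr ?_) le_sup_right
          have hmm : (u * w) * w⁻¹ ∈ Subgroup.zpowers (u * w) ⊔ Subgroup.zpowers w :=
            mul_mem (Subgroup.mem_sup_left (Subgroup.mem_zpowers (u * w)))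
              (Subgroup.mem_sup_right (inv_mem (Subgroup.mem_zpowers w)))
          simpa using hmm
        · refine sup_le (Subgroup.zpowers_le.mpr ?_) le_sup_right
          exact mul_mem (Subgroup.mem_sup_left (Subgroup.mem_zpowers u))
            (Subgroup.mem_sup_right (Subgroup.mem_zpowers w))
    obtain ⟨g, m, n, s, t, hbg, hcg, hgbc⟩ := hloc
    have hx' : b * c = g ^ (m + n) := by rw [hbg, hcg, zpow_add]
    have hgg : g = g ^ (m * s + n * t) := by
      conv_lhs => rw [hgbc, hbg, hcg]
      rw [← zpow_mul, ← zpow_mul, ← zpow_add]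
    have hy : (b * c) ^ (s * m) = b ^ ((m + n) * s) := by
      rw [hx', ← zpow_mul, hbg, ← zpow_mul]
      congr 1
      ring
    have hz : (b * c) ^ (t * n) = c ^ ((m + n) * t) := by
      rw [hx', ← zpow_mul, hcg, ← zpow_mul]
      congr 1
      ring
    have hyz : (b * c) ^ (s * m) * (b * c) ^ (t * n) = b * c := by
      rw [← zpow_add, hx', ← zpow_mul]
      rw [show (m + n) * (s * m + t * n) = (m * s + n * t) * (m + n) by ring]
      rw [zpow_mul, ← hgg]
    rw [← hyz]
    refine mul_mem (Subgroup.mem_sup_left ?_) (Subgroup.mem_sup_right ?_)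
    · exact Subgroup.mem_inf.mpr ⟨Subgroup.zpow_mem _ hxA _, by rw [hy]; exact Subgroup.zpow_mem _ hbB _⟩
    · exact Subgroup.mem_inf.mpr ⟨Subgroup.zpow_mem _ hxA _, by rw [hz]; exact Subgroup.zpow_mem _ hcC _⟩
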